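/- Let M and N be finite Kripke models with points w and u respectively. The following are equivalent: (i) for every point v of every finite n-model (any n), M, w ⊨ β(v) iff N, u ⊨ β(v); (ii) M, w and N, u satisfy exactly the same NNIL-formulas; (iii) M, w and N, u satisfy exactly the same MR-formulas. -/

import Mathlib

/-! ## Formulas of intuitionistic propositional logic -/

inductive Formula : Type
  | bot : Formula
  | var : ℕ → Formula
  | and : Formula → Formula → Formula
  | or  : Formula → Formula → Formula
  | imp : Formula → Formula → Formula
  deriving DecidableEq

namespace Formula

def top : Formula := imp bot bot

def iff_ (φ ψ : Formula) : Formula := and (imp φ ψ) (imp ψ φ)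

/-- `φ` contains no implication at all. -/
def noImp : Formula → Prop
  | bot => True
  | var _ => True
  | and φ ψ => noImp φ ∧ noImp ψ
  | or φ ψ => noImp φ ∧ noImp ψ
  | imp _ _ => False

/-- NNIL-formulas: no nesting of implications to the left. -/
def IsNNIL : Formula → Prop
  | bot => True
  | var _ => True
  | and φ ψ => IsNNIL φ ∧ IsNNIL ψ
  | or φ ψ => IsNNIL φ ∧ IsNNIL ψ
  | imp φ ψ => noImp φ ∧ IsNNIL ψ

/-- `φ` is an `n`-formula: all its propositional variables are among `p_0, …, p_{n-1}`. -/
def varsBelow (n : ℕ) : Formula → Prop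
  | bot => True
  | var p => p < n
  | and φ ψ => varsBelow n φ ∧ varsBelow n ψ
  | or φ ψ => varsBelow n φ ∧ varsBelow n ψ
  | imp φ ψ => varsBelow n φ ∧ varsBelow n ψ

/-- the propositional variable `p` occurs in the formula -/
def occurs (p : ℕ) : Formula → Prop
  | bot => False
  | var q => q = p
  | and φ ψ => occurs p φ ∨ occurs p ψ
  | or φ ψ => occurs p φ ∨ occurs p ψ
  | imp φ ψ => occurs p φ ∨ occurs p ψ

/-- uniform substitution -/
def subst (σ : ℕ → Formula) : Formula → Formula
  | bot => bot
  | var p => σ p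
  | and φ ψ => and (subst σ φ) (subst σ ψ)
  | or φ ψ => or (subst σ φ) (subst σ ψ)
  | imp φ ψ => imp (subst σ φ) (subst σ ψ)

end Formula

/-- finite conjunction (empty conjunction is ⊤) -/
def listAnd : List Formula → Formula
  | [] => Formula.top
  | φ :: l => Formula.and φ (listAnd l)

/-- finite disjunction (empty disjunction is ⊥) -/
def listOr : List Formula → Formula
  | [] => Formula.bot
  | φ :: l => Formula.or φ (listOr l)

/-! ## Kripke structures, models and satisfaction -/

/-- raw Kripke structure: worlds, relation, Boolean valuation -/
structure KStruct where
  W : Type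
  R : W → W → Prop
  V : W → ℕ → Bool

namespace KStruct

/-- a Kripke model: `R` is a partial order and `V` is persistent -/
def IsModel (M : KStruct) : Prop :=
  (∀ w, M.R w w) ∧
  (∀ w u v, M.R w u → M.R u v → M.R w v) ∧
  (∀ w u, M.R w u → M.R u w → w = u) ∧
  (∀ w u p, M.R w u → M.V w p = true → M.V u p = true)

/-- an `n`-model: a Kripke model whose valuation is restricted to the variables `p_0,…,p_{n-1}` -/
def IsNModel (M : KStruct) (n : ℕ) : Prop :=
  M.IsModel ∧ ∀ w p, n ≤ p → M.V w p = false

/-- intuitionistic satisfaction -/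
def sat (M : KStruct) : M.W → Formula → Prop
  | _, Formula.bot => False
  | w, Formula.var p => M.V w p = true
  | w, Formula.and φ ψ => M.sat w φ ∧ M.sat w ψ
  | w, Formula.or φ ψ => M.sat w φ ∨ M.sat w ψ
  | w, Formula.imp φ ψ => ∀ u, M.R w u → M.sat u φ → M.sat u ψ

/-- the submodel on a subset of the worlds -/
def restrict (M : KStruct) (S : Set M.W) : KStruct where
  W := S
  R := fun a b => M.R a.1 b.1
  V := fun a p => M.V a.1 p

end KStruct

/-- monotonic map between Kripke structures: preserves the order and the colors -/
def Monotonic (M N : KStruct) (f : M.W → N.W) : Prop :=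
  (∀ w u, M.R w u → N.R (f w) (f u)) ∧ (∀ w p, N.V (f w) p = M.V w p)

/-- p-morphism: a monotonic map satisfying the forth condition -/
def PMorphism (M N : KStruct) (f : M.W → N.W) : Prop :=
  Monotonic M N f ∧ ∀ w u', N.R (f w) u' → ∃ u, M.R w u ∧ f u = u'

/-- MR: the class of formulas reflected by monotonic maps between Kripke models -/
def MR (φ : Formula) : Prop :=
  ∀ (N M : KStruct), N.IsModel → M.IsModel →
    ∀ f : N.W → M.W, Monotonic N M f → ∀ w : N.W, M.sat (f w) φ → N.sat w φ

/-- `r` is a root of `M` -/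
def IsRoot (M : KStruct) (r : M.W) : Prop := ∀ w, M.R r w

/-- `M` is tree-like with root `r`: rooted, and each point has a finite,
linearly ordered set of predecessors -/
def IsTree (M : KStruct) (r : M.W) : Prop :=
  IsRoot M r ∧ (∀ w : M.W, {u | M.R u w}.Finite) ∧
  (∀ w u v : M.W, M.R u w → M.R v w → (M.R u v ∨ M.R v u))

/-- `u` is an immediate (proper) successor of `w` -/
def ImmSucc (M : KStruct) (w u : M.W) : Prop :=
  M.R w u ∧ w ≠ u ∧ ∀ v, M.R w v → M.R v u → v = w ∨ v = u

/-- `S` carries a color-preserving submodel of `M` -/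
def ColorPresSub (M : KStruct) (S : Set M.W) : Prop :=
  ∀ w ∈ S, ∀ u, M.R w u → ∃ v ∈ S, M.R w v ∧ ∀ p, M.V v p = M.V u p

/-! ## The β-formulas of finite models -/

/-- the variables among `p_0,…,p_{n-1}` true at `w` -/
def propList (M : KStruct) (n : ℕ) (w : M.W) : List Formula :=
  ((List.range n).filter (fun p => M.V w p)).map Formula.var

/-- the variables among `p_0,…,p_{n-1}` false at `w` -/
def notpropList (M : KStruct) (n : ℕ) (w : M.W) : List Formula :=
  ((List.range n).filter (fun p => !(M.V w p))).map Formula.var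

open Classical in
/-- the immediate successors of `w`, as a list -/
noncomputable def immSuccList (M : KStruct) [Fintype M.W] (w : M.W) : List M.W :=
  (Finset.univ.filter (fun u => ImmSucc M w u)).toList

/-- β(w), defined by recursion on the depth of `w` (computed with enough fuel):
`β(w) = ⋀prop(w) → (⋁notprop(w) ∨ β(w_1) ∨ … ∨ β(w_k))` where the `w_i` are the
immediate successors of `w` (for maximal `w` the last disjunct is the empty disjunction). -/
noncomputable def betaFuel (M : KStruct) [Fintype M.W] (n : ℕ) : ℕ → M.W → Formula
  | 0, _ => Formula.bot
  | (k+1), w =>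
      Formula.imp (listAnd (propList M n w))
        (listOr (notpropList M n w ++ (immSuccList M w).map (fun u => betaFuel M n k u)))

/-- β(w) for a point `w` of a finite `n`-model: `Fintype.card M.W` is an upper bound
for the depth of any point, so the recursion above never runs out of fuel. -/
noncomputable def beta (M : KStruct) [inst : Fintype M.W] (n : ℕ) (w : M.W) : Formula :=
  betaFuel M n (Fintype.card M.W) w

/-! ## Unravelings -/

/-- the unraveling `T_N` of a rooted model `(N, r)`: points are the finite sequences
`⟨r, w_1, …, w_k⟩` in which each entry is an immediate successor of the preceding one,
ordered by the initial-segment relation; such a sequence satisfies the same variables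
as its last entry. -/
def Unravel (M : KStruct) (r : M.W) : KStruct where
  W := {l : List M.W // l.head? = some r ∧ List.Chain' (ImmSucc M) l}
  R := fun σ τ => σ.1 <+: τ.1
  V := fun σ p => (σ.1.getLast?.map (fun w => M.V w p)).getD false

/-! ## Kripke frames -/

structure KFrame where
  W : Type
  R : W → W → Prop

namespace KFrame

/-- a Kripke frame: `R` is a partial order -/
def IsFrame (F : KFrame) : Prop :=
  (∀ w, F.R w w) ∧ (∀ w u v, F.R w u → F.R u v → F.R w v) ∧
  (∀ w u, F.R w u → F.R u w → w = u)

def Persistent (F : KFrame) (V : F.W → ℕ → Bool) : Prop :=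
  ∀ w u p, F.R w u → V w p = true → V u p = true

/-- the model on `F` given by a valuation -/
def model (F : KFrame) (V : F.W → ℕ → Bool) : KStruct := ⟨F.W, F.R, V⟩

/-- `F ⊨ φ` : `φ` is true at every point of every model on `F` -/
def valid (F : KFrame) (φ : Formula) : Prop :=
  ∀ V, F.Persistent V → ∀ w, (F.model V).sat w φ

/-- the substructure of `F` on a subset `S` of its domain, with the restricted order -/
def restrictF (F : KFrame) (S : Set F.W) : KFrame :=
  ⟨S, fun a b => F.R a.1 b.1⟩

end KFrame

/-- a monotonic map from a model `N` into a frame `F` which is color-consistent: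
`f(w) R f(u)` implies `col(w) ≤ col(u)` -/
def ColorConsistentMap (N : KStruct) (F : KFrame) (f : N.W → F.W) : Prop :=
  (∀ w u, N.R w u → F.R (f w) (f u)) ∧
  (∀ w u, F.R (f w) (f u) → ∀ p, N.V w p = true → N.V u p = true)



section Basic
variable {A B K P : KStruct}

lemma sat_top (A : KStruct) (w : A.W) : A.sat w Formula.top := fun _ _ h => h

lemma sat_persist (hA : A.IsModel) (φ : Formula) :
    ∀ w u : A.W, A.R w u → A.sat w φ → A.sat u φ := by
  induction φ with
  | bot => intro w u _ h; exact h
  | var p => intro w u hr h; exact hA.2.2.2 w u p hr h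
  | and φ ψ ih1 ih2 => intro w u hr h; exact ⟨ih1 w u hr h.1, ih2 w u hr h.2⟩
  | or φ ψ ih1 ih2 =>
      intro w u hr h
      cases h with
      | inl h => exact Or.inl (ih1 w u hr h)
      | inr h => exact Or.inr (ih2 w u hr h)
  | imp φ ψ ih1 ih2 => intro w u hr h v huv hv; exact h v (hA.2.1 w u v hr huv) hv

lemma sat_listAnd {l : List Formula} {w : A.W} :
    A.sat w (listAnd l) ↔ ∀ φ ∈ l, A.sat w φ := by
  induction l with
  | nil => simpa [listAnd] using sat_top A w
  | cons φ l ih =>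
      show A.sat w φ ∧ A.sat w (listAnd l) ↔ _
      simp [ih]

lemma sat_listOr {l : List Formula} {w : A.W} :
    A.sat w (listOr l) ↔ ∃ φ ∈ l, A.sat w φ := by
  induction l with
  | nil => show False ↔ _ ; simp
  | cons φ l ih =>
      show A.sat w φ ∨ A.sat w (listOr l) ↔ _
      simp [ih]

/-- restriction of the valuation to the first `n` variables -/
def restrV (A : KStruct) (n : ℕ) : KStruct := ⟨A.W, A.R, fun w p => decide (p < n) && A.V w p⟩

instance restrVFintype (A : KStruct) [h : Fintype A.W] (n : ℕ) : Fintype (restrV A n).W := h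

lemma restrV_isModel (hA : A.IsModel) (n : ℕ) : (restrV A n).IsModel := by
  refine ⟨hA.1, hA.2.1, hA.2.2.1, ?_⟩
  intro w u p hr h
  simp only [restrV, Bool.and_eq_true, decide_eq_true_eq] at h ⊢
  exact ⟨h.1, hA.2.2.2 w u p hr h.2⟩

lemma restrV_isNModel (hA : A.IsModel) (n : ℕ) : (restrV A n).IsNModel n := by
  refine ⟨restrV_isModel hA n, ?_⟩
  intro w p hp
  simp only [restrV, Bool.and_eq_false_iff]
  left; simpa using Nat.not_lt.2 hp

lemma sat_restrV (n : ℕ) (φ : Formula) (hφ : φ.varsBelow n) :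
    ∀ w : A.W, ((restrV A n).sat w φ ↔ A.sat w φ) := by
  induction φ with
  | bot => intro w; exact Iff.rfl
  | var p =>
      intro w
      have hp : p < n := hφ
      show (decide (p < n) && A.V w p) = true ↔ A.V w p = true
      simp [hp]
  | and φ ψ ih1 ih2 => intro w; exact and_congr (ih1 hφ.1 w) (ih2 hφ.2 w)
  | or φ ψ ih1 ih2 => intro w; exact or_congr (ih1 hφ.1 w) (ih2 hφ.2 w)
  | imp φ ψ ih1 ih2 =>
      intro w
      exact forall_congr' fun u => imp_congr Iff.rfl (imp_congr (ih1 hφ.1 u) (ih2 hφ.2 u))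

/-- implication-free formulas only depend on the color -/
lemma sat_noImp_iff (a : A.W) (b : B.W) (h : ∀ p, A.V a p = B.V b p)
    (φ : Formula) (hφ : φ.noImp) : A.sat a φ ↔ B.sat b φ := by
  induction φ with
  | bot => exact Iff.rfl
  | var p => show A.V a p = true ↔ B.V b p = true; rw [h p]
  | and φ ψ ih1 ih2 => exact and_congr (ih1 hφ.1) (ih2 hφ.2)
  | or φ ψ ih1 ih2 => exact or_congr (ih1 hφ.1) (ih2 hφ.2)
  | imp φ ψ ih1 ih2 => exact absurd hφ id

/-- NNIL formulas are reflected by monotonic maps -/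
lemma nnil_MR (φ : Formula) (h : φ.IsNNIL) : MR φ := by
  intro N M hN hM f hf
  induction φ with
  | bot => intro w hw; exact hw
  | var p =>
      intro w hw
      have hv : M.V (f w) p = true := hw
      rw [hf.2 w p] at hv
      exact hv
  | and φ ψ ih1 ih2 => intro w hw; exact ⟨ih1 h.1 w hw.1, ih2 h.2 w hw.2⟩
  | or φ ψ ih1 ih2 =>
      intro w hw
      cases hw with
      | inl hw => exact Or.inl (ih1 h.1 w hw)
      | inr hw => exact Or.inr (ih2 h.2 w hw)
  | imp φ ψ ih1 ih2 =>
      intro w hw u hu hφu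
      have hcol : ∀ p, M.V (f u) p = N.V u p := fun p => hf.2 u p
      have : M.sat (f u) φ := (sat_noImp_iff u (f u) (fun p => (hcol p).symm) φ h.1).1 hφu
      exact ih2 h.2 u (hw (f u) (hf.1 w u hu) this)

end Basic

section Beta
variable {A K P : KStruct}

lemma mem_propList {n : ℕ} {v : P.W} {φ : Formula} :
    φ ∈ propList P n v ↔ ∃ p, p < n ∧ P.V v p = true ∧ φ = Formula.var p := by
  simp only [propList, List.mem_map, List.mem_filter, List.mem_range]
  constructor
  · rintro ⟨p, ⟨hp, hv⟩, rfl⟩; exact ⟨p, hp, by simpa using hv, rfl⟩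
  · rintro ⟨p, hp, hv, rfl⟩; exact ⟨p, ⟨hp, by simpa using hv⟩, rfl⟩

lemma mem_notpropList {n : ℕ} {v : P.W} {φ : Formula} :
    φ ∈ notpropList P n v ↔ ∃ p, p < n ∧ P.V v p = false ∧ φ = Formula.var p := by
  simp only [notpropList, List.mem_map, List.mem_filter, List.mem_range]
  constructor
  · rintro ⟨p, ⟨hp, hv⟩, rfl⟩
    exact ⟨p, hp, by simpa using hv, rfl⟩
  · rintro ⟨p, hp, hv, rfl⟩
    exact ⟨p, ⟨hp, by simp [hv]⟩, rfl⟩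

lemma mem_immSuccList [Fintype P.W] {v x : P.W} :
    x ∈ immSuccList P v ↔ ImmSucc P v x := by
  classical
  simp [immSuccList, Finset.mem_toList]

lemma betaFuel_vars [Fintype P.W] (n : ℕ) :
    ∀ (m : ℕ) (v : P.W), (betaFuel P n m v).varsBelow n := by
  intro m
  induction m with
  | zero => intro v; trivial
  | succ m ih =>
      intro v
      refine ⟨?_, ?_⟩
      · -- listAnd (propList)
        have : ∀ l : List Formula, (∀ φ ∈ l, φ.varsBelow n) → (listAnd l).varsBelow n := by
          intro l
          induction l with
          | nil => intro _; exact ⟨trivial, trivial⟩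
          | cons φ l ihl => intro h; exact ⟨h φ List.mem_cons_self, ihl fun ψ hψ => h ψ (List.mem_cons_of_mem _ hψ)⟩
        refine this _ ?_
        intro φ hφ
        rcases mem_propList.1 hφ with ⟨p, hp, _, rfl⟩
        exact hp
      · have : ∀ l : List Formula, (∀ φ ∈ l, φ.varsBelow n) → (listOr l).varsBelow n := by
          intro l
          induction l with
          | nil => intro _; trivial
          | cons φ l ihl => intro h; exact ⟨h φ List.mem_cons_self, ihl fun ψ hψ => h ψ (List.mem_cons_of_mem _ hψ)⟩
        refine this _ ?_
        intro φ hφ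
        rcases List.mem_append.1 hφ with h | h
        · rcases mem_notpropList.1 h with ⟨p, hp, _, rfl⟩; exact hp
        · rcases List.mem_map.1 h with ⟨x, _, rfl⟩; exact ih x

/-- monotonicity of `betaFuel` in the fuel -/
lemma betaFuel_fuelMono [Fintype P.W] (n : ℕ) :
    ∀ (m m' : ℕ), m ≤ m' → ∀ (v : P.W) (k : K.W),
      K.sat k (betaFuel P n m v) → K.sat k (betaFuel P n m' v) := by
  intro m
  induction m with
  | zero => intro m' _ v k h; exact absurd h id
  | succ m ih =>
      intro m' hm v k h
      obtain ⟨m'', rfl⟩ : ∃ m'', m' = m'' + 1 := ⟨m' - 1, by omega⟩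
      have hm'' : m ≤ m'' := by omega
      intro u hu hA
      have := h u hu hA
      rcases sat_listOr.1 this with ⟨ψ, hψ, hsψ⟩
      refine sat_listOr.2 ?_
      rcases List.mem_append.1 hψ with hmem | hmem
      · exact ⟨ψ, List.mem_append.2 (Or.inl hmem), hsψ⟩
      · rcases List.mem_map.1 hmem with ⟨x, hx, rfl⟩
        exact ⟨betaFuel P n m'' x, List.mem_append.2 (Or.inr (List.mem_map.2 ⟨x, hx, rfl⟩)),
          ih m'' hm'' x u hsψ⟩

/-- unfolding a refutation of `betaFuel (m+1)` -/
lemma refute_unfold [Fintype P.W] {n : ℕ} {m : ℕ} {v : P.W} {k : K.W}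
    (H : ¬ K.sat k (betaFuel P n (m + 1) v)) :
    ∃ k', K.R k k' ∧ (∀ p, p < n → P.V v p = K.V k' p) ∧
      ∀ x, ImmSucc P v x → ¬ K.sat k' (betaFuel P n m x) := by
  classical
  have H' : ¬ ∀ u, K.R k u → K.sat u (listAnd (propList P n v)) →
      K.sat u (listOr (notpropList P n v ++ (immSuccList P v).map (betaFuel P n m))) := H
  push_neg at H'
  obtain ⟨k', hk', hand, hor⟩ := H'
  refine ⟨k', hk', ?_, ?_⟩
  · intro p hp
    cases hvp : P.V v p with
    | true =>
        have : K.sat k' (Formula.var p) :=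
          sat_listAnd.1 hand _ (mem_propList.2 ⟨p, hp, hvp, rfl⟩)
        exact this.symm
    | false =>
        have : ¬ K.sat k' (Formula.var p) := by
          intro hs
          exact hor (sat_listOr.2 ⟨Formula.var p,
            List.mem_append.2 (Or.inl (mem_notpropList.2 ⟨p, hp, hvp, rfl⟩)), hs⟩)
        have : K.V k' p = false := by
          cases hkp : K.V k' p with
          | true => exact absurd hkp this
          | false => rfl
        exact this.symm
  · intro x hx hs
    exact hor (sat_listOr.2 ⟨betaFuel P n m x,
      List.mem_append.2 (Or.inr (List.mem_map.2 ⟨x, mem_immSuccList.2 hx, rfl⟩)), hs⟩)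

/-- packaging a refutation of `betaFuel (m+1)` from local data at `k'` -/
lemma refute_pack [Fintype P.W] (hK : K.IsModel) {n : ℕ} {m : ℕ} {v : P.W} {k' : K.W}
    (hcol : ∀ p, p < n → P.V v p = K.V k' p)
    (hsucc : ∀ x, ImmSucc P v x → ¬ K.sat k' (betaFuel P n m x)) :
    ¬ K.sat k' (betaFuel P n (m + 1) v) := by
  intro hs
  have hand : K.sat k' (listAnd (propList P n v)) := by
    refine sat_listAnd.2 ?_
    intro φ hφ
    rcases mem_propList.1 hφ with ⟨p, hp, hv, rfl⟩
    show K.V k' p = true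
    rw [← hcol p hp]; exact hv
  have hor := hs k' (hK.1 k') hand
  rcases sat_listOr.1 hor with ⟨ψ, hψ, hsψ⟩
  rcases List.mem_append.1 hψ with hmem | hmem
  · rcases mem_notpropList.1 hmem with ⟨p, hp, hv, rfl⟩
    have : K.V k' p = true := hsψ
    rw [← hcol p hp] at this
    exact absurd (hv ▸ this) (by simp)
  · rcases List.mem_map.1 hmem with ⟨x, hx, rfl⟩
    exact hsucc x (mem_immSuccList.1 hx) hsψ

/-- every point refutes its own β, at every fuel -/
lemma self_refute [Fintype P.W] (hP : P.IsModel) (n : ℕ) :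
    ∀ (m : ℕ) (v : P.W), ¬ P.sat v (betaFuel P n m v) := by
  intro m
  induction m with
  | zero => intro v h; exact h
  | succ m ih =>
      intro v
      refine refute_pack hP (fun p _ => rfl) ?_
      intro x hx hs
      exact ih x (sat_persist hP _ v x hx.1 hs)

end Beta

section NNILBeta
variable {A K P : KStruct}

/-- curried implication -/
def impList : List Formula → Formula → Formula
  | [], ψ => ψ
  | φ :: l, ψ => Formula.imp φ (impList l ψ)

lemma sat_impList (hA : A.IsModel) (l : List Formula) (ψ : Formula) :
    ∀ w : A.W, A.sat w (impList l ψ) ↔ A.sat w (Formula.imp (listAnd l) ψ) := by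
  induction l with
  | nil =>
      intro w
      constructor
      · intro h u hu _; exact sat_persist hA ψ w u hu h
      · intro h; exact h w (hA.1 w) (sat_top A w)
  | cons φ l ih =>
      intro w
      constructor
      · intro h u hu hand
        exact (ih u).1 (h u hu hand.1) u (hA.1 u) hand.2
      · intro h u hu hφ
        refine (ih u).2 ?_
        intro u' hu' hl
        exact h u' (hA.2.1 w u u' hu hu')
          ⟨sat_persist hA φ u u' hu' hφ, hl⟩

/-- the NNIL variant of `betaFuel` -/
noncomputable def betaFuel' (P : KStruct) [Fintype P.W] (n : ℕ) : ℕ → P.W → Formula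
  | 0, _ => Formula.bot
  | (m+1), v =>
      impList (propList P n v)
        (listOr (notpropList P n v ++ (immSuccList P v).map (fun x => betaFuel' P n m x)))

lemma noImp_listOrAppend {n : ℕ} {v : P.W} [Fintype P.W] {m : ℕ}
    (ih : ∀ x : P.W, (betaFuel' P n m x).IsNNIL) :
    (listOr (notpropList P n v ++ (immSuccList P v).map (fun x => betaFuel' P n m x))).IsNNIL := by
  have : ∀ l : List Formula, (∀ φ ∈ l, φ.IsNNIL) → (listOr l).IsNNIL := by
    intro l
    induction l with
    | nil => intro _; trivial
    | cons φ l ihl => intro h; exact ⟨h φ List.mem_cons_self, ihl fun ψ hψ => h ψ (List.mem_cons_of_mem _ hψ)⟩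
  refine this _ ?_
  intro φ hφ
  rcases List.mem_append.1 hφ with h | h
  · rcases mem_notpropList.1 h with ⟨p, _, _, rfl⟩; trivial
  · rcases List.mem_map.1 h with ⟨x, _, rfl⟩; exact ih x

lemma betaFuel'_nnil [Fintype P.W] (n : ℕ) :
    ∀ (m : ℕ) (v : P.W), (betaFuel' P n m v).IsNNIL := by
  intro m
  induction m with
  | zero => intro v; trivial
  | succ m ih =>
      intro v
      show (impList (propList P n v) _).IsNNIL
      have key : ∀ (l : List Formula) (ψ : Formula), (∀ φ ∈ l, φ.noImp) → ψ.IsNNIL →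
          (impList l ψ).IsNNIL := by
        intro l
        induction l with
        | nil => intro ψ _ hψ; exact hψ
        | cons φ l ihl => intro ψ h hψ; exact ⟨h φ List.mem_cons_self, ihl ψ (fun χ hχ => h χ (List.mem_cons_of_mem _ hχ)) hψ⟩
      refine key _ _ ?_ (noImp_listOrAppend ih)
      intro φ hφ
      rcases mem_propList.1 hφ with ⟨p, _, _, rfl⟩
      trivial

lemma sat_betaFuel' (hK : K.IsModel) [Fintype P.W] (n : ℕ) :
    ∀ (m : ℕ) (v : P.W) (k : K.W),
      K.sat k (betaFuel' P n m v) ↔ K.sat k (betaFuel P n m v) := by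
  intro m
  induction m with
  | zero => intro v k; exact Iff.rfl
  | succ m ih =>
      intro v k
      rw [show betaFuel' P n (m+1) v = impList (propList P n v)
        (listOr (notpropList P n v ++ (immSuccList P v).map (fun x => betaFuel' P n m x))) from rfl,
        sat_impList hK]
      show (∀ u, K.R k u → _ → _) ↔ (∀ u, K.R k u → _ → _)
      refine forall_congr' fun u => imp_congr Iff.rfl (imp_congr Iff.rfl ?_)
      rw [sat_listOr, sat_listOr]
      constructor
      · rintro ⟨ψ, hψ, hs⟩
        rcases List.mem_append.1 hψ with h | h
        · exact ⟨ψ, List.mem_append.2 (Or.inl h), hs⟩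
        · rcases List.mem_map.1 h with ⟨x, hx, rfl⟩
          exact ⟨betaFuel P n m x, List.mem_append.2 (Or.inr (List.mem_map.2 ⟨x, hx, rfl⟩)),
            (ih x u).1 hs⟩
      · rintro ⟨ψ, hψ, hs⟩
        rcases List.mem_append.1 hψ with h | h
        · exact ⟨ψ, List.mem_append.2 (Or.inl h), hs⟩
        · rcases List.mem_map.1 h with ⟨x, hx, rfl⟩
          exact ⟨betaFuel' P n m x, List.mem_append.2 (Or.inr (List.mem_map.2 ⟨x, hx, rfl⟩)),
            (ih x u).2 hs⟩

/-- a bound on the variables of a formula -/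
def Formula.maxVar : Formula → ℕ
  | Formula.bot => 0
  | Formula.var p => p + 1
  | Formula.and φ ψ => max φ.maxVar ψ.maxVar
  | Formula.or φ ψ => max φ.maxVar ψ.maxVar
  | Formula.imp φ ψ => max φ.maxVar ψ.maxVar

lemma varsBelow_maxVar : ∀ φ : Formula, φ.varsBelow φ.maxVar := by
  intro φ
  have mono : ∀ (φ : Formula) (n n' : ℕ), n ≤ n' → φ.varsBelow n → φ.varsBelow n' := by
    intro φ
    induction φ with
    | bot => intro n n' _ _; trivial
    | var p => intro n n' h hp; exact lt_of_lt_of_le hp h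
    | and φ ψ ih1 ih2 => intro n n' h hp; exact ⟨ih1 n n' h hp.1, ih2 n n' h hp.2⟩
    | or φ ψ ih1 ih2 => intro n n' h hp; exact ⟨ih1 n n' h hp.1, ih2 n n' h hp.2⟩
    | imp φ ψ ih1 ih2 => intro n n' h hp; exact ⟨ih1 n n' h hp.1, ih2 n n' h hp.2⟩
  induction φ with
  | bot => trivial
  | var p => exact Nat.lt_succ_self p
  | and φ ψ ih1 ih2 => exact ⟨mono φ _ _ (le_max_left _ _) ih1, mono ψ _ _ (le_max_right _ _) ih2⟩
  | or φ ψ ih1 ih2 => exact ⟨mono φ _ _ (le_max_left _ _) ih1, mono ψ _ _ (le_max_right _ _) ih2⟩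
  | imp φ ψ ih1 ih2 => exact ⟨mono φ _ _ (le_max_left _ _) ih1, mono ψ _ _ (le_max_right _ _) ih2⟩

end NNILBeta

section Poset
variable {A : KStruct}

lemma exists_R_minimal (hA : A.IsModel) :
    ∀ S : Finset A.W, S.Nonempty → ∃ m ∈ S, ∀ z ∈ S, A.R z m → z = m := by
  classical
  intro S
  induction S using Finset.strongInduction with
  | _ S ih =>
    intro hS
    obtain ⟨a, ha⟩ := hS
    by_cases h : ∃ z ∈ S, A.R z a ∧ z ≠ a
    · obtain ⟨z, hz, hza, hne⟩ := h
      set S' := S.filter (fun x => A.R x a ∧ x ≠ a) with hS'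
      have hss : S' ⊂ S := by
        refine Finset.filter_ssubset.2 ⟨a, ha, ?_⟩
        simp
      obtain ⟨m, hm, hmin⟩ := ih S' hss ⟨z, by simp [hS', hz, hza, hne]⟩
      have hm' := Finset.mem_filter.1 hm
      refine ⟨m, hm'.1, ?_⟩
      intro x hx hxm
      by_cases hxa : x = a
      · subst hxa
        cases hm'.2.2 (hA.2.2.1 m x hm'.2.1 hxm)
      · exact hmin x (Finset.mem_filter.2 ⟨hx, hA.2.1 x m a hxm hm'.2.1, hxa⟩) hxm
    · push_neg at h
      exact ⟨a, ha, h⟩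

lemma exists_immSucc_le (hA : A.IsModel) [Fintype A.W] {v v' : A.W}
    (h : A.R v v') (hne : v ≠ v') : ∃ x, ImmSucc A v x ∧ A.R x v' := by
  classical
  obtain ⟨m, hm, hmin⟩ := exists_R_minimal hA
    (Finset.univ.filter (fun x => A.R v x ∧ v ≠ x ∧ A.R x v'))
    ⟨v', by simp [h, hne, hA.1 v']⟩
  rw [Finset.mem_filter] at hm
  obtain ⟨-, hvm, hvne, hmv'⟩ := hm
  refine ⟨m, ⟨hvm, hvne, ?_⟩, hmv'⟩
  intro z hvz hzm
  by_cases hzv : z = v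
  · exact Or.inl hzv
  · refine Or.inr (hmin z ?_ hzm)
    exact Finset.mem_filter.2 ⟨Finset.mem_univ z, hvz, fun hh => hzv hh.symm,
      hA.2.1 z m v' hzm hmv'⟩

open Classical in
/-- the strict upset of a point -/
noncomputable def strictUp (A : KStruct) [Fintype A.W] (v : A.W) : Finset A.W :=
  Finset.univ.filter (fun x => A.R v x ∧ v ≠ x)

lemma strictUp_card_lt (hA : A.IsModel) [Fintype A.W] {v x : A.W}
    (h : A.R v x) (hne : v ≠ x) : (strictUp A x).card < (strictUp A v).card := by
  classical
  refine Finset.card_lt_card ⟨?_, ?_⟩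
  · intro y hy
    rw [strictUp, Finset.mem_filter] at hy ⊢
    refine ⟨Finset.mem_univ y, hA.2.1 v x y h hy.2.1, ?_⟩
    rintro rfl
    exact hne (hA.2.2.1 _ _ h hy.2.1)
  · intro hsub
    have hx : x ∈ strictUp A v := by
      rw [strictUp, Finset.mem_filter]; exact ⟨Finset.mem_univ x, h, hne⟩
    have := hsub hx
    rw [strictUp, Finset.mem_filter] at this
    exact this.2.2 rfl

lemma strictUp_card_lt_card (hA : A.IsModel) [Fintype A.W] (v : A.W) :
    (strictUp A v).card < Fintype.card A.W := by
  classical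
  rw [← Finset.card_univ]
  refine Finset.card_lt_card ⟨Finset.filter_subset _ _, ?_⟩
  intro hsub
  have := hsub (Finset.mem_univ v)
  rw [strictUp, Finset.mem_filter] at this
  exact this.2.2 rfl

end Poset

section TCon
variable {P K : KStruct} [Fintype P.W] {n : ℕ} {b : P.W}

/-- the set of pairs `(v, k)` with `v` above `b`, matching colors, and `k` refuting `β(v)` -/
def TSet (P K : KStruct) [Fintype P.W] (n : ℕ) (b : P.W) : Set (P.W × K.W) :=
  {q | P.R b q.1 ∧ (∀ p, P.V q.1 p = K.V q.2 p) ∧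
    ¬ K.sat q.2 (betaFuel P n ((strictUp P q.1).card + 1) q.1)}

lemma col_ext (hP : P.IsNModel n) (hK : K.IsNModel n) {v : P.W} {k : K.W}
    (h : ∀ p, p < n → P.V v p = K.V k p) : ∀ p, P.V v p = K.V k p := by
  intro p
  by_cases hp : p < n
  · exact h p hp
  · rw [hP.2 v p (Nat.not_lt.1 hp), hK.2 k p (Nat.not_lt.1 hp)]

lemma step_T (hP : P.IsNModel n) (hK : K.IsNModel n) {v : P.W} {k : K.W}
    (hvk : (v, k) ∈ TSet P K n b) {x : P.W} (hx : ImmSucc P v x) :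
    ∃ k', K.R k k' ∧ (x, k') ∈ TSet P K n b := by
  obtain ⟨hbv, hcol, href⟩ := hvk
  obtain ⟨k₁, hk₁, hcol₁, hsucc₁⟩ := refute_unfold href
  have h1 : ¬ K.sat k₁ (betaFuel P n ((strictUp P x).card + 1) x) := by
    have hle : (strictUp P x).card + 1 ≤ (strictUp P v).card :=
      strictUp_card_lt hP.1 hx.1 hx.2.1
    intro hs
    exact hsucc₁ x hx (betaFuel_fuelMono n _ _ hle x k₁ hs)
  obtain ⟨k₂, hk₂, hcol₂, hsucc₂⟩ := refute_unfold h1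
  exact ⟨k₂, hK.1.2.1 k k₁ k₂ hk₁ hk₂,
    hP.1.2.1 b v x hbv hx.1, col_ext hP hK hcol₂, refute_pack hK.1 hcol₂ hsucc₂⟩

lemma forth_T (hP : P.IsNModel n) (hK : K.IsNModel n) :
    ∀ (c : ℕ) (v : P.W), (strictUp P v).card ≤ c → ∀ k : K.W,
      (v, k) ∈ TSet P K n b → ∀ v', P.R v v' →
      ∃ k', K.R k k' ∧ (v', k') ∈ TSet P K n b := by
  intro c
  induction c with
  | zero =>
      intro v hc k hvk v' hv'
      by_cases he : v = v'
      · exact ⟨k, hK.1.1 k, he ▸ hvk⟩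
      · obtain ⟨x, hx, -⟩ := exists_immSucc_le hP.1 hv' he
        exfalso
        have : x ∈ strictUp P v := by
          classical
          rw [strictUp, Finset.mem_filter]
          exact ⟨Finset.mem_univ x, hx.1, hx.2.1⟩
        have := Finset.card_pos.2 ⟨x, this⟩
        omega
  | succ c ih =>
      intro v hc k hvk v' hv'
      by_cases he : v = v'
      · exact ⟨k, hK.1.1 k, he ▸ hvk⟩
      · obtain ⟨x, hx, hxv'⟩ := exists_immSucc_le hP.1 hv' he
        obtain ⟨k₂, hk₂, hmem⟩ := step_T hP hK hvk hx
        have hle : (strictUp P x).card ≤ c := by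
          have := strictUp_card_lt hP.1 hx.1 hx.2.1
          omega
        obtain ⟨k', hk', hmem'⟩ := ih x hle k₂ hmem v' hxv'
        exact ⟨k', hK.1.2.1 k k₂ k' hk₂ hk', hmem'⟩

/-- the model of pairs -/
def TS (P K : KStruct) [Fintype P.W] (n : ℕ) (b : P.W) : KStruct where
  W := {q : P.W × K.W // q ∈ TSet P K n b}
  R := fun s t => P.R s.1.1 t.1.1 ∧ K.R s.1.2 t.1.2
  V := fun s p => P.V s.1.1 p

lemma TS_isModel (hP : P.IsNModel n) (hK : K.IsNModel n) :
    (TS P K n b).IsModel := by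
  refine ⟨fun s => ⟨hP.1.1 _, hK.1.1 _⟩,
    fun s t r hst htr => ⟨hP.1.2.1 _ _ _ hst.1 htr.1, hK.1.2.1 _ _ _ hst.2 htr.2⟩,
    ?_, fun s t p hst h => hP.1.2.2.2 _ _ p hst.1 h⟩
  intro s t hst hts
  apply Subtype.ext
  exact Prod.ext (hP.1.2.2.1 _ _ hst.1 hts.1) (hK.1.2.2.1 _ _ hst.2 hts.2)

lemma TS_monotonic (hP : P.IsNModel n) (hK : K.IsNModel n) :
    Monotonic (TS P K n b) K (fun s => s.1.2) := by
  refine ⟨fun s t hst => hst.2, ?_⟩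
  intro s p
  exact (s.2.2.1 p).symm

lemma transfer_T (hP : P.IsNModel n) (hK : K.IsNModel n) :
    ∀ (φ : Formula) (s : (TS P K n b).W),
      (TS P K n b).sat s φ ↔ P.sat s.1.1 φ := by
  intro φ
  induction φ with
  | bot => intro s; exact Iff.rfl
  | var p => intro s; exact Iff.rfl
  | and φ ψ ih1 ih2 => intro s; exact and_congr (ih1 s) (ih2 s)
  | or φ ψ ih1 ih2 => intro s; exact or_congr (ih1 s) (ih2 s)
  | imp φ ψ ih1 ih2 =>
      intro s
      constructor
      · intro h v' hv' hφ
        obtain ⟨k', hk', hmem⟩ :=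
          forth_T hP hK (strictUp P s.1.1).card s.1.1 le_rfl s.1.2 s.2 v' hv'
        have := h ⟨(v', k'), hmem⟩ ⟨hv', hk'⟩ ((ih1 ⟨(v', k'), hmem⟩).2 hφ)
        exact (ih2 _).1 this
      · intro h s' hss' hφ
        exact (ih2 s').2 (h s'.1.1 hss'.1 ((ih1 s').1 hφ))

/-- Master lemma: if `a` refutes `β(b)` then every MR `n`-formula true at `a` is true at `b`. -/
lemma master (hP : P.IsNModel n) (hK : K.IsNModel n) (b : P.W) (a : K.W)
    (hβ : ¬ K.sat a (beta P n b)) (φ : Formula) (hMR : MR φ) (hv : φ.varsBelow n) :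
    K.sat a φ → P.sat b φ := by
  intro hsat
  have hcard : 0 < Fintype.card P.W := Fintype.card_pos_iff.2 ⟨b⟩
  obtain ⟨c, hc⟩ : ∃ c, Fintype.card P.W = c + 1 :=
    ⟨Fintype.card P.W - 1, by omega⟩
  rw [beta, hc] at hβ
  obtain ⟨k₁, hk₁, hcol₁, hsucc₁⟩ := refute_unfold hβ
  have hroot : ((b, k₁) : P.W × K.W) ∈ TSet P K n b := by
    refine ⟨hP.1.1 b, col_ext hP hK hcol₁, ?_⟩
    refine refute_pack hK.1 hcol₁ ?_
    intro x hx hs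
    have hle : (strictUp P b).card ≤ c := by
      have := strictUp_card_lt_card hP.1 b
      omega
    exact hsucc₁ x hx (betaFuel_fuelMono n _ _ hle x k₁ hs)
  have hk₁φ : K.sat k₁ φ := sat_persist hK.1 φ a k₁ hk₁ hsat
  have := hMR (TS P K n b) K (TS_isModel hP hK) hK.1 (fun s => s.1.2)
    (TS_monotonic hP hK) ⟨(b, k₁), hroot⟩ hk₁φ
  exact (transfer_T hP hK φ ⟨(b, k₁), hroot⟩).1 this

end TCon

section Assembly

lemma self_refute_beta {B : KStruct} [Fintype B.W] (hB : B.IsModel) (n : ℕ) (b : B.W) :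
    ¬ B.sat b (beta (restrV B n) n b) := by
  intro h
  have h' : (restrV B n).sat b (beta (restrV B n) n b) :=
    (sat_restrV (A := B) n (beta (restrV B n) n b)
      (betaFuel_vars (P := restrV B n) n (Fintype.card (restrV B n).W) b) b).2 h
  exact self_refute (restrV_isModel hB n) n _ b h'

lemma master_restr {A B : KStruct} [Fintype A.W] [Fintype B.W]
    (hA : A.IsModel) (hB : B.IsModel) (a : A.W) (b : B.W) (n : ℕ)
    (hβ : ¬ A.sat a (beta (restrV B n) n b))
    (φ : Formula) (hMR : MR φ) (hv : φ.varsBelow n) :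
    A.sat a φ → B.sat b φ := by
  intro hsat
  have hβ' : ¬ (restrV A n).sat a (beta (restrV B n) n b) := fun hh =>
    hβ ((sat_restrV (A := A) n (beta (restrV B n) n b)
      (betaFuel_vars (P := restrV B n) n (Fintype.card (restrV B n).W) b) a).1 hh)
  have := master (restrV_isNModel hB n) (restrV_isNModel hA n) b a hβ' φ hMR hv
    ((sat_restrV (A := A) n φ hv a).2 hsat)
  exact (sat_restrV (A := B) n φ hv b).1 this

end Assembly

/-- for finite Kripke models with distinguished points, agreement on all
β-formulas, agreement on all NNIL-formulas, and agreement on all MR-formulas coincide. -/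
theorem beta_nnil_mr_equivalence
    (M N : KStruct) [Fintype M.W] [Fintype N.W]
    (hM : M.IsModel) (hN : N.IsModel) (w : M.W) (u : N.W) :
    ((∀ (n : ℕ) (P : KStruct) (instP : Fintype P.W), P.IsNModel n →
        ∀ v : P.W, (M.sat w (@beta P instP n v) ↔ N.sat u (@beta P instP n v)))
      ↔ (∀ φ : Formula, φ.IsNNIL → (M.sat w φ ↔ N.sat u φ)))
    ∧ ((∀ φ : Formula, φ.IsNNIL → (M.sat w φ ↔ N.sat u φ))
      ↔ (∀ φ : Formula, MR φ → (M.sat w φ ↔ N.sat u φ))) := by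
  classical
  refine ⟨⟨?_, ?_⟩, ⟨?_, ?_⟩⟩
  · -- (i) → (ii)
    intro hi φ hφ
    have hv := varsBelow_maxVar φ
    set n := φ.maxVar with hn
    have hMR := nnil_MR φ hφ
    constructor
    · intro hsat
      have hself := self_refute_beta hN n u
      have h := hi n (restrV N n) (restrVFintype N n) (restrV_isNModel hN n) u
      have hβ : ¬ M.sat w (beta (restrV N n) n u) := fun hh => hself (h.1 hh)
      exact master_restr hM hN w u n hβ φ hMR hv hsat
    · intro hsat
      have hself := self_refute_beta hM n w
      have h := hi n (restrV M n) (restrVFintype M n) (restrV_isNModel hM n) w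
      have hβ : ¬ N.sat u (beta (restrV M n) n w) := fun hh => hself (h.2 hh)
      exact master_restr hN hM u w n hβ φ hMR hv hsat
  · -- (ii) → (i)
    intro hii n P instP hP v
    letI := instP
    have h1 : ∀ (A : KStruct), A.IsModel → ∀ a : A.W,
        (A.sat a (beta P n v) ↔ A.sat a (betaFuel' P n (Fintype.card P.W) v)) :=
      fun A hA a => (sat_betaFuel' hA n _ v a).symm
    rw [h1 M hM w, h1 N hN u]
    exact hii _ (betaFuel'_nnil n _ v)
  · -- (ii) → (iii)
    intro hii φ hMR
    have hv := varsBelow_maxVar φ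
    set n := φ.maxVar with hn
    constructor
    · intro hsat
      have hself := self_refute_beta hN n u
      have hβ : ¬ M.sat w (beta (restrV N n) n u) := by
        intro hh
        apply hself
        have h1 : M.sat w (betaFuel' (restrV N n) n (Fintype.card (restrV N n).W) u) :=
          (sat_betaFuel' (P := restrV N n) hM n _ u w).2 hh
        have h2 := (hii _ (betaFuel'_nnil (P := restrV N n) n _ u)).1 h1
        exact (sat_betaFuel' (P := restrV N n) hN n _ u u).1 h2
      exact master_restr hM hN w u n hβ φ hMR hv hsat
    · intro hsat
      have hself := self_refute_beta hM n w
      have hβ : ¬ N.sat u (beta (restrV M n) n w) := by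
        intro hh
        apply hself
        have h1 : N.sat u (betaFuel' (restrV M n) n (Fintype.card (restrV M n).W) w) :=
          (sat_betaFuel' (P := restrV M n) hN n _ w u).2 hh
        have h2 := (hii _ (betaFuel'_nnil (P := restrV M n) n _ w)).2 h1
        exact (sat_betaFuel' (P := restrV M n) hM n _ w w).1 h2
      exact master_restr hN hM u w n hβ φ hMR hv hsat
  · -- (iii) → (ii)
    intro hiii φ hφ
    exact hiii φ (nnil_MR φ hφ)
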